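/- Let s₀ > 0, β > 0, and let Θ: [s₀, ∞) → (0, ∞) be a C¹, strictly increasing function with lim_{s→∞} Θ(s) = +∞, and let Θ^{-1}: [Θ(s₀), ∞) → [s₀, ∞) denote its inverse. If ∫_{s₀}^∞ Θ'(s)/(s Θ(s)) ds = +∞, then ∫_0^{δ₀} dδ / ( δ · Θ^{-1}(δ^{−β}) ) = +∞, where δ₀ = Θ(s₀)^{−1/β}. -/

import Mathlib

open MeasureTheory

theorem stmt_11 (s₀ β : ℝ) (hs₀ : 0 < s₀) (hβ : 0 < β)
    (Θ Θinv : ℝ → ℝ)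
    (hΘ_pos : ∀ s : ℝ, s₀ ≤ s → 0 < Θ s)
    (hΘ_mono : StrictMonoOn Θ (Set.Ici s₀))
    (hΘ_C1 : ContDiffOn ℝ 1 Θ (Set.Ici s₀))
    (hΘ_top : Filter.Tendsto Θ Filter.atTop Filter.atTop)
    (hinv₁ : ∀ s : ℝ, s₀ ≤ s → Θinv (Θ s) = s)
    (hinv₂ : ∀ u : ℝ, Θ s₀ ≤ u → s₀ ≤ Θinv u ∧ Θ (Θinv u) = u)
    (hdiv : ∫⁻ s in Set.Ioi s₀,
      ENNReal.ofReal (derivWithin Θ (Set.Ici s₀) s / (s * Θ s)) = ⊤) :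
    ∫⁻ δ in Set.Ioo (0:ℝ) (Θ s₀ ^ (-(1 / β))),
      ENNReal.ofReal (1 / (δ * Θinv (δ ^ (-β)))) = ⊤ := by
  set p : ℝ := -(1 / β) with hp
  have hβne : β ≠ 0 := ne_of_gt hβ
  have hpneg : p < 0 := by
    rw [hp]; simp only [neg_neg, neg_lt_zero]; positivity
  set f : ℝ → ℝ := fun s => Θ s ^ p with hf
  set f' : ℝ → ℝ := fun s => derivWithin Θ (Set.Ici s₀) s * p * Θ s ^ (p - 1) with hf'
  -- derivative facts
  have hderiv : ∀ x ∈ Set.Ioi s₀, HasDerivWithinAt f (f' x) (Set.Ioi s₀) x := by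
    intro x hx
    have hx' : s₀ < x := hx
    have hnhds : Set.Ici s₀ ∈ nhds x := Ici_mem_nhds hx'
    have hdiff : DifferentiableWithinAt ℝ Θ (Set.Ici s₀) x :=
      hΘ_C1.differentiableOn one_ne_zero x (le_of_lt hx')
    have hΘd : HasDerivAt Θ (derivWithin Θ (Set.Ici s₀) x) x :=
      hdiff.hasDerivWithinAt.hasDerivAt hnhds
    have hne : Θ x ≠ 0 := ne_of_gt (hΘ_pos x (le_of_lt hx'))
    exact (hΘd.rpow_const (Or.inl hne)).hasDerivWithinAt
  -- injectivity: f strictly antitone on Ioi s₀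
  have hanti : StrictAntiOn f (Set.Ioi s₀) := by
    intro x hx y hy hxy
    exact Real.rpow_lt_rpow_of_neg (hΘ_pos x (le_of_lt hx))
      (hΘ_mono (Set.mem_Ici.2 (le_of_lt hx)) (Set.mem_Ici.2 (le_of_lt hy)) hxy) hpneg
  have hinj : Set.InjOn f (Set.Ioi s₀) := hanti.injOn
  -- image is inside Ioo 0 δ₀
  have himg : f '' Set.Ioi s₀ ⊆ Set.Ioo (0:ℝ) (Θ s₀ ^ p) := by
    rintro _ ⟨x, hx, rfl⟩
    constructor
    · exact Real.rpow_pos_of_pos (hΘ_pos x (le_of_lt hx)) p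
    · exact Real.rpow_lt_rpow_of_neg (hΘ_pos s₀ le_rfl)
        (hΘ_mono (Set.mem_Ici.2 le_rfl) (Set.mem_Ici.2 (le_of_lt hx)) hx) hpneg
  -- change of variables
  have hcov :
      ∫⁻ x in f '' Set.Ioi s₀, ENNReal.ofReal (1 / (x * Θinv (x ^ (-β))))
        = ∫⁻ x in Set.Ioi s₀,
            ENNReal.ofReal |f' x| * ENNReal.ofReal (1 / (f x * Θinv ((f x) ^ (-β)))) := by
    have := lintegral_image_eq_lintegral_abs_det_fderiv_mul volume measurableSet_Ioi
      (fun x hx => ((hderiv x hx).hasFDerivWithinAt)) hinj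
      (fun x => ENNReal.ofReal (1 / (x * Θinv (x ^ (-β)))))
    simpa only [ContinuousLinearMap.det_toSpanSingleton] using this
  -- pointwise lower bound on Ioi s₀
  have hpt : ∀ x ∈ Set.Ioi s₀,
      ENNReal.ofReal ((1/β) * (derivWithin Θ (Set.Ici s₀) x / (x * Θ x)))
        ≤ ENNReal.ofReal |f' x| * ENNReal.ofReal (1 / (f x * Θinv ((f x) ^ (-β)))) := by
    intro x hx
    have hx' : s₀ < x := hx
    have hx0 : 0 < x := lt_trans hs₀ hx'
    have hΘx : 0 < Θ x := hΘ_pos x (le_of_lt hx')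
    have hfx : (f x) ^ (-β) = Θ x := by
      rw [hf]
      simp only
      rw [← Real.rpow_mul (le_of_lt hΘx), hp]
      norm_num
      rw [inv_mul_cancel₀ hβne, Real.rpow_one]
    have hinvx : Θinv ((f x) ^ (-β)) = x := by rw [hfx]; exact hinv₁ x (le_of_lt hx')
    rw [hinvx]
    set D := derivWithin Θ (Set.Ici s₀) x with hD
    rcases le_or_gt D 0 with hD0 | hD0
    · have : (1/β) * (D / (x * Θ x)) ≤ 0 := by
        apply mul_nonpos_of_nonneg_of_nonpos (by positivity)
        apply div_nonpos_of_nonpos_of_nonneg hD0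
        positivity
      rw [ENNReal.ofReal_of_nonpos this]
      exact zero_le
    · have hfxpos : 0 < f x := Real.rpow_pos_of_pos hΘx p
      have habs : |f' x| = (1/β) * Θ x ^ (p - 1) * D := by
        rw [hf']
        simp only
        rw [abs_mul, abs_mul, abs_of_pos hD0, abs_of_pos (Real.rpow_pos_of_pos hΘx _),
          hp, abs_neg, abs_of_pos (by positivity : (0:ℝ) < 1/β)]
        ring
      rw [habs, ← ENNReal.ofReal_mul (by positivity)]
      apply ENNReal.ofReal_le_ofReal
      apply le_of_eq
      have hfxval : f x = Θ x ^ p := rfl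
      have hΘp : (0:ℝ) < Θ x ^ p := Real.rpow_pos_of_pos hΘx p
      rw [hfxval, Real.rpow_sub hΘx, Real.rpow_one]
      field_simp
  -- assemble
  have h1 : ∫⁻ x in Set.Ioi s₀,
      ENNReal.ofReal ((1/β) * (derivWithin Θ (Set.Ici s₀) x / (x * Θ x))) = ⊤ := by
    have : ∀ x : ℝ, ENNReal.ofReal ((1/β) * (derivWithin Θ (Set.Ici s₀) x / (x * Θ x)))
        = ENNReal.ofReal (1/β) * ENNReal.ofReal (derivWithin Θ (Set.Ici s₀) x / (x * Θ x)) :=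
      fun x => ENNReal.ofReal_mul (by positivity)
    simp_rw [this]
    rw [lintegral_const_mul' _ _ ENNReal.ofReal_ne_top, hdiv, ENNReal.mul_top]
    simp only [ne_eq, ENNReal.ofReal_eq_zero, not_le]
    positivity
  rw [← top_le_iff, ← h1]
  calc ∫⁻ x in Set.Ioi s₀,
        ENNReal.ofReal ((1/β) * (derivWithin Θ (Set.Ici s₀) x / (x * Θ x)))
      ≤ ∫⁻ x in Set.Ioi s₀,
          ENNReal.ofReal |f' x| * ENNReal.ofReal (1 / (f x * Θinv ((f x) ^ (-β)))) :=
        lintegral_mono_ae ((ae_restrict_iff' measurableSet_Ioi).2 (ae_of_all _ hpt))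
    _ = ∫⁻ x in f '' Set.Ioi s₀, ENNReal.ofReal (1 / (x * Θinv (x ^ (-β)))) := hcov.symm
    _ ≤ ∫⁻ δ in Set.Ioo (0:ℝ) (Θ s₀ ^ (-(1 / β))),
          ENNReal.ofReal (1 / (δ * Θinv (δ ^ (-β)))) := lintegral_mono_set himg
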